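/- Let N ≥ 3 and k = ⌊N/2⌋. In the inseparability graph on the signatures of SO(N) (with adjacency given by existence of a common irreducible constituent upon restriction to SO(N−1), expressed via interlacing inequalities), the diameter of the (connected) graph is exactly k. -/
import Mathlib


/-- A signature of `SO(2k)`: integers `m 0 ≥ m 1 ≥ … ≥ m (k-2) ≥ |m (k-1)|`
(indices `0,…,k-1`; entries of `m` beyond `k-1` are irrelevant). -/
def SigD (k : ℕ) (m : ℕ → ℤ) : Prop :=
  (∀ i, i + 3 ≤ k → m (i + 1) ≤ m i) ∧ |m (k - 1)| ≤ m (k - 2)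

/-- `q` interlaces `m`: `m i ≥ q i ≥ |m (i+1)|` for `i = 0,…,k-2`. -/
def InterD (k : ℕ) (m q : ℕ → ℤ) : Prop :=
  ∀ i, i + 2 ≤ k → q i ≤ m i ∧ |m (i + 1)| ≤ q i

/-- Two `SO(2k)`-signatures are adjacent iff they admit a common interlacing tuple. -/
def AdjD (k : ℕ) (m m' : ℕ → ℤ) : Prop :=
  ∃ q : ℕ → ℤ, InterD k m q ∧ InterD k m' q

/-- A signature of `SO(2k+1)`: integers `m 0 ≥ m 1 ≥ … ≥ m (k-1) ≥ 0`. -/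
def SigB (k : ℕ) (m : ℕ → ℤ) : Prop :=
  (∀ i, i + 2 ≤ k → m (i + 1) ≤ m i) ∧ 0 ≤ m (k - 1)

/-- `p` interlaces `m`: `m i ≥ p i ≥ m (i+1)` for `i < k-1` and `m (k-1) ≥ p (k-1) ≥ -m (k-1)`. -/
def InterB (k : ℕ) (m p : ℕ → ℤ) : Prop :=
  (∀ i, i + 2 ≤ k → p i ≤ m i ∧ m (i + 1) ≤ p i) ∧
    p (k - 1) ≤ m (k - 1) ∧ -(m (k - 1)) ≤ p (k - 1)

/-- Two `SO(2k+1)`-signatures are adjacent iff they admit a common interlacing tuple. -/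
def AdjB (k : ℕ) (m m' : ℕ → ℤ) : Prop :=
  ∃ p : ℕ → ℤ, InterB k m p ∧ InterB k m' p

/- ===== auxiliary material ===== -/

private lemma mono_of_step {f : ℕ → ℤ} (hf : ∀ j, f (j + 1) ≤ f j) :
    ∀ i j : ℕ, i ≤ j → f j ≤ f i := by
  intro i j hij
  induction j with
  | zero => have : i = 0 := by omega
            simp [this]
  | succ n ih =>
    rcases Nat.lt_or_ge i (n + 1) with h | h
    · exact (hf n).trans (ih (by omega))
    · have : i = n + 1 := by omega
      simp [this]

/-- The interpolating family: `W k f g t j = max (f (j+t)) (g (j+(k-t)))`. -/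
private def Wfam (k : ℕ) (f g : ℕ → ℤ) (t j : ℕ) : ℤ :=
  max (f (j + t)) (g (j + (k - t)))

section Wfam

variable {k : ℕ} {f g : ℕ → ℤ}
variable (hf : ∀ j, f (j + 1) ≤ f j) (hg : ∀ j, g (j + 1) ≤ g j)
variable (hf0 : ∀ j, 0 ≤ f j) (hg0 : ∀ j, 0 ≤ g j)

include hf0 in
private lemma Wfam_nonneg (t j : ℕ) : 0 ≤ Wfam k f g t j :=
  le_trans (hf0 _) (le_max_left _ _)

include hf hg in
private lemma Wfam_step (t j : ℕ) : Wfam k f g t (j + 1) ≤ Wfam k f g t j := by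
  apply max_le
  · exact le_trans (mono_of_step hf _ _ (by omega)) (le_max_left _ _)
  · exact le_trans (mono_of_step hg _ _ (by omega)) (le_max_right _ _)

include hf in
private lemma Wfam_shift1 {t : ℕ} (ht : t < k) (i : ℕ) :
    Wfam k f g (t + 1) (i + 1) ≤ Wfam k f g t i := by
  apply max_le
  · exact le_trans (mono_of_step hf _ _ (by omega)) (le_max_left _ _)
  · have h : i + 1 + (k - (t + 1)) = i + (k - t) := by omega
    rw [Wfam, h]
    exact le_max_right _ _

include hg in
private lemma Wfam_shift2 {t : ℕ} (ht : t < k) (i : ℕ) :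
    Wfam k f g t (i + 1) ≤ Wfam k f g (t + 1) i := by
  apply max_le
  · have h : i + 1 + t = i + (t + 1) := by omega
    rw [Wfam, h]
    exact le_max_left _ _
  · exact le_trans (mono_of_step hg _ _ (by omega)) (le_max_right _ _)

include hf hg hf0 hg0 in
private lemma Wfam_sigB (t : ℕ) : SigB k (Wfam k f g t) :=
  ⟨fun i _ => Wfam_step hf hg t i, Wfam_nonneg hf0 t (k - 1)⟩

include hf hg hf0 hg0 in
private lemma Wfam_sigD (hk2 : 2 ≤ k) (t : ℕ) : SigD k (Wfam k f g t) := by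
  constructor
  · intro i _
    exact Wfam_step hf hg t i
  · rw [abs_of_nonneg (Wfam_nonneg hf0 t (k - 1)),
      show k - 1 = (k - 2) + 1 by omega]
    exact Wfam_step hf hg t (k - 2)

include hf hg hf0 hg0 in
private lemma Wfam_adjB {t : ℕ} (ht : t < k) :
    AdjB k (Wfam k f g t) (Wfam k f g (t + 1)) := by
  refine ⟨fun i => max (Wfam k f g t (i + 1)) (Wfam k f g (t + 1) (i + 1)), ?_, ?_⟩
  · refine ⟨fun i _ => ⟨max_le (Wfam_step hf hg t i) (Wfam_shift1 hf ht i),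
      le_max_left _ _⟩, max_le (Wfam_step hf hg t (k - 1)) (Wfam_shift1 hf ht (k - 1)), ?_⟩
    exact le_trans (neg_nonpos.mpr (Wfam_nonneg hf0 t (k - 1)))
      (le_trans (Wfam_nonneg hf0 t (k - 1 + 1)) (le_max_left _ _))
  · refine ⟨fun i _ => ⟨max_le (Wfam_shift2 hg ht i) (Wfam_step hf hg (t + 1) i),
      le_max_right _ _⟩, max_le (Wfam_shift2 hg ht (k - 1)) (Wfam_step hf hg (t + 1) (k - 1)), ?_⟩
    exact le_trans (neg_nonpos.mpr (Wfam_nonneg hf0 (t + 1) (k - 1)))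
      (le_trans (Wfam_nonneg hf0 t (k - 1 + 1)) (le_max_left _ _))

include hf hg hf0 hg0 in
private lemma Wfam_adjD {t : ℕ} (ht : t < k) :
    AdjD k (Wfam k f g t) (Wfam k f g (t + 1)) := by
  refine ⟨fun i => max (Wfam k f g t (i + 1)) (Wfam k f g (t + 1) (i + 1)), ?_, ?_⟩
  · intro i _
    refine ⟨max_le (Wfam_step hf hg t i) (Wfam_shift1 hf ht i), ?_⟩
    rw [abs_of_nonneg (Wfam_nonneg hf0 t (i + 1))]
    exact le_max_left _ _
  · intro i _
    refine ⟨max_le (Wfam_shift2 hg ht i) (Wfam_step hf hg (t + 1) i), ?_⟩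
    rw [abs_of_nonneg (Wfam_nonneg hf0 (t + 1) (i + 1))]
    exact le_max_right _ _

end Wfam

/- ===== B-type signatures ===== -/

private lemma sigB_chain {k : ℕ} {m : ℕ → ℤ} (h : SigB k m) :
    ∀ i j : ℕ, i ≤ j → j + 1 ≤ k → m j ≤ m i := by
  intro i j hij hjk
  induction j with
  | zero => have : i = 0 := by omega
            simp [this]
  | succ n ih =>
    rcases Nat.lt_or_ge i (n + 1) with hlt | hge
    · exact (h.1 n (by omega)).trans (ih (by omega) (by omega))
    · have : i = n + 1 := by omega
      simp [this]

private lemma sigB_nonneg {k : ℕ} {m : ℕ → ℤ} (h : SigB k m) {j : ℕ} (hj : j + 1 ≤ k) :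
    0 ≤ m j :=
  h.2.trans (sigB_chain h j (k - 1) (by omega) (by omega))

private def extB (k : ℕ) (m : ℕ → ℤ) (j : ℕ) : ℤ := if j + 1 ≤ k then m j else 0

private lemma extB_nonneg {k : ℕ} {m : ℕ → ℤ} (h : SigB k m) (j : ℕ) : 0 ≤ extB k m j := by
  unfold extB
  split
  · exact sigB_nonneg h (by omega)
  · exact le_refl 0

private lemma extB_step {k : ℕ} {m : ℕ → ℤ} (h : SigB k m) (j : ℕ) :
    extB k m (j + 1) ≤ extB k m j := by
  by_cases hj : j + 2 ≤ k
  · rw [extB, extB, if_pos (by omega : j + 1 + 1 ≤ k), if_pos (by omega : j + 1 ≤ k)]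
    exact h.1 j hj
  · have h0 : extB k m (j + 1) = 0 := by rw [extB, if_neg (by omega)]
    rw [h0]
    exact extB_nonneg h j

private lemma sigB_congr {k : ℕ} {a b : ℕ → ℤ} (hk : 1 ≤ k)
    (hab : ∀ j, j + 1 ≤ k → a j = b j) (h : SigB k a) : SigB k b := by
  constructor
  · intro i hi
    rw [← hab i (by omega), ← hab (i + 1) (by omega)]
    exact h.1 i hi
  · rw [← hab (k - 1) (by omega)]
    exact h.2

private lemma interB_congr {k : ℕ} {a b p : ℕ → ℤ} (hk : 1 ≤ k)
    (hab : ∀ j, j + 1 ≤ k → a j = b j) (h : InterB k a p) : InterB k b p := by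
  refine ⟨fun i hi => ?_, ?_, ?_⟩
  · rw [← hab i (by omega), ← hab (i + 1) (by omega)]
    exact h.1 i hi
  · rw [← hab (k - 1) (by omega)]
    exact h.2.1
  · rw [← hab (k - 1) (by omega)]
    exact h.2.2

private lemma adjB_congr {k : ℕ} {a b a' b' : ℕ → ℤ} (hk : 1 ≤ k)
    (ha : ∀ j, j + 1 ≤ k → a j = a' j) (hb : ∀ j, j + 1 ≤ k → b j = b' j)
    (h : AdjB k a b) : AdjB k a' b' := by
  obtain ⟨p, h1, h2⟩ := h
  exact ⟨p, interB_congr hk ha h1, interB_congr hk hb h2⟩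

/- ===== D-type signatures ===== -/

private lemma sigD_chain {k : ℕ} {m : ℕ → ℤ} (h : SigD k m) :
    ∀ i j : ℕ, i ≤ j → j + 2 ≤ k → m j ≤ m i := by
  intro i j hij hjk
  induction j with
  | zero => have : i = 0 := by omega
            simp [this]
  | succ n ih =>
    rcases Nat.lt_or_ge i (n + 1) with hlt | hge
    · exact (h.1 n (by omega)).trans (ih (by omega) (by omega))
    · have : i = n + 1 := by omega
      simp [this]

private lemma sigD_nonneg {k : ℕ} {m : ℕ → ℤ} (h : SigD k m) (hk2 : 2 ≤ k)
    {j : ℕ} (hj : j + 2 ≤ k) : 0 ≤ m j :=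
  ((abs_nonneg _).trans h.2).trans (sigD_chain h j (k - 2) (by omega) (by omega))

private def extD (k : ℕ) (m : ℕ → ℤ) (j : ℕ) : ℤ :=
  if j + 2 ≤ k then m j else if j + 1 = k then |m j| else 0

private lemma extD_nonneg {k : ℕ} {m : ℕ → ℤ} (h : SigD k m) (hk2 : 2 ≤ k) (j : ℕ) :
    0 ≤ extD k m j := by
  unfold extD
  split
  · exact sigD_nonneg h hk2 (by omega)
  · split
    · exact abs_nonneg _
    · exact le_refl 0

private lemma extD_step {k : ℕ} {m : ℕ → ℤ} (h : SigD k m) (hk2 : 2 ≤ k) (j : ℕ) :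
    extD k m (j + 1) ≤ extD k m j := by
  by_cases h3 : j + 3 ≤ k
  · rw [extD, extD, if_pos (by omega : j + 1 + 2 ≤ k), if_pos (by omega : j + 2 ≤ k)]
    exact h.1 j h3
  · by_cases h2 : j + 2 ≤ k
    · rw [extD, extD, if_neg (by omega : ¬ (j + 1 + 2 ≤ k)),
        if_pos (by omega : j + 1 + 1 = k), if_pos h2]
      have e1 : k - 1 = j + 1 := by omega
      have e2 : k - 2 = j := by omega
      have := h.2
      rw [e1, e2] at this
      exact this
    · have h0 : extD k m (j + 1) = 0 := by
        rw [extD, if_neg (by omega), if_neg (by omega)]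
      rw [h0]
      exact extD_nonneg h hk2 j

private lemma sigD_congr {k : ℕ} {a b : ℕ → ℤ} (hk2 : 2 ≤ k)
    (hab : ∀ j, j + 2 ≤ k → a j = b j) (habs : |a (k - 1)| = |b (k - 1)|)
    (h : SigD k a) : SigD k b := by
  constructor
  · intro i hi
    rw [← hab i (by omega), ← hab (i + 1) (by omega)]
    exact h.1 i hi
  · rw [← habs, ← hab (k - 2) (by omega)]
    exact h.2

private lemma interD_congr {k : ℕ} {a b p : ℕ → ℤ} (hk2 : 2 ≤ k)
    (hab : ∀ j, j + 2 ≤ k → a j = b j) (habs : |a (k - 1)| = |b (k - 1)|)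
    (h : InterD k a p) : InterD k b p := by
  intro i hi
  refine ⟨?_, ?_⟩
  · rw [← hab i hi]
    exact (h i hi).1
  · by_cases h3 : i + 3 ≤ k
    · rw [← hab (i + 1) (by omega)]
      exact (h i hi).2
    · have e : i + 1 = k - 1 := by omega
      rw [e, ← habs, ← e]
      exact (h i hi).2

private lemma adjD_congr {k : ℕ} {a b a' b' : ℕ → ℤ} (hk2 : 2 ≤ k)
    (ha : ∀ j, j + 2 ≤ k → a j = a' j) (haabs : |a (k - 1)| = |a' (k - 1)|)
    (hb : ∀ j, j + 2 ≤ k → b j = b' j) (hbabs : |b (k - 1)| = |b' (k - 1)|)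
    (h : AdjD k a b) : AdjD k a' b' := by
  obtain ⟨q, h1, h2⟩ := h
  exact ⟨q, interD_congr hk2 ha haabs h1, interD_congr hk2 hb hbabs h2⟩

/- ===== endpoint agreements ===== -/

private lemma WB_zero {k : ℕ} {m m' : ℕ → ℤ} (h : SigB k m) {j : ℕ} (hj : j + 1 ≤ k) :
    Wfam k (extB k m) (extB k m') 0 j = m j := by
  have e1 : extB k m (j + 0) = m j := by rw [Nat.add_zero, extB, if_pos hj]
  have e2 : extB k m' (j + (k - 0)) = 0 := by rw [extB, if_neg (by omega)]
  rw [Wfam, e1, e2]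
  exact max_eq_left (sigB_nonneg h hj)

private lemma WB_last {k : ℕ} {m m' : ℕ → ℤ} (h : SigB k m') {j : ℕ} (hj : j + 1 ≤ k) :
    Wfam k (extB k m) (extB k m') k j = m' j := by
  have e1 : extB k m (j + k) = 0 := by rw [extB, if_neg (by omega)]
  have e2 : extB k m' (j + (k - k)) = m' j := by
    rw [Nat.sub_self, Nat.add_zero, extB, if_pos hj]
  rw [Wfam, e1, e2]
  exact max_eq_right (sigB_nonneg h hj)

private lemma WD_zero {k : ℕ} {m m' : ℕ → ℤ} (h : SigD k m) (hk2 : 2 ≤ k)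
    {j : ℕ} (hj : j + 2 ≤ k) : Wfam k (extD k m) (extD k m') 0 j = m j := by
  have e1 : extD k m (j + 0) = m j := by rw [Nat.add_zero, extD, if_pos hj]
  have e2 : extD k m' (j + (k - 0)) = 0 := by
    rw [extD, if_neg (by omega), if_neg (by omega)]
  rw [Wfam, e1, e2]
  exact max_eq_left (sigD_nonneg h hk2 hj)

private lemma WD_zero_abs {k : ℕ} {m m' : ℕ → ℤ} (hk2 : 2 ≤ k) :
    |Wfam k (extD k m) (extD k m') 0 (k - 1)| = |m (k - 1)| := by
  have e1 : extD k m (k - 1 + 0) = |m (k - 1)| := by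
    rw [Nat.add_zero, extD, if_neg (by omega), if_pos (by omega)]
  have e2 : extD k m' (k - 1 + (k - 0)) = 0 := by
    rw [extD, if_neg (by omega), if_neg (by omega)]
  rw [Wfam, e1, e2, max_eq_left (abs_nonneg _), abs_abs]

private lemma WD_last {k : ℕ} {m m' : ℕ → ℤ} (h : SigD k m') (hk2 : 2 ≤ k)
    {j : ℕ} (hj : j + 2 ≤ k) : Wfam k (extD k m) (extD k m') k j = m' j := by
  have e1 : extD k m (j + k) = 0 := by
    rw [extD, if_neg (by omega), if_neg (by omega)]
  have e2 : extD k m' (j + (k - k)) = m' j := by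
    rw [Nat.sub_self, Nat.add_zero, extD, if_pos hj]
  rw [Wfam, e1, e2]
  exact max_eq_right (sigD_nonneg h hk2 hj)

private lemma WD_last_abs {k : ℕ} {m m' : ℕ → ℤ} (hk2 : 2 ≤ k) :
    |Wfam k (extD k m) (extD k m') k (k - 1)| = |m' (k - 1)| := by
  have e1 : extD k m (k - 1 + k) = 0 := by
    rw [extD, if_neg (by omega), if_neg (by omega)]
  have e2 : extD k m' (k - 1 + (k - k)) = |m' (k - 1)| := by
    rw [Nat.sub_self, Nat.add_zero, extD, if_neg (by omega), if_pos (by omega)]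
  rw [Wfam, e1, e2, max_eq_right (abs_nonneg _), abs_abs]

/- ===== lower bounds ===== -/

private lemma lowerB {k : ℕ} (hk : 1 ≤ k) (L : ℕ) (z : ℕ → ℕ → ℤ)
    (h0 : z 0 = fun _ => (0 : ℤ)) (hL : z L = fun _ => (1 : ℤ))
    (hsig : ∀ i ≤ L, SigB k (z i)) (hadj : ∀ i < L, AdjB k (z i) (z (i + 1))) :
    k ≤ L := by
  by_contra hc
  push_neg at hc
  have key : ∀ t, t ≤ L → ∀ j, t ≤ j → j + 1 ≤ k → z t j = 0 := by
    intro t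
    induction t with
    | zero => intro _ j _ _
              rw [h0]
    | succ n ih =>
      intro hn j hj hjk
      obtain ⟨i, rfl⟩ : ∃ i, j = i + 1 := ⟨j - 1, by omega⟩
      obtain ⟨p, hp1, hp2⟩ := hadj n (by omega)
      have h1 : z (n + 1) (i + 1) ≤ p i := (hp2.1 i (by omega)).2
      have h2 : p i ≤ z n i := (hp1.1 i (by omega)).1
      have h3 : z n i = 0 := ih (by omega) i (by omega) (by omega)
      have h4 : 0 ≤ z (n + 1) (i + 1) := sigB_nonneg (hsig (n + 1) (by omega)) hjk
      linarith
  have hone := key L le_rfl (k - 1) (by omega) (by omega)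
  rw [hL] at hone
  simp at hone

private lemma lowerD {k : ℕ} (hk : 1 ≤ k) (L : ℕ) (z : ℕ → ℕ → ℤ)
    (h0 : z 0 = fun _ => (0 : ℤ)) (hL : z L = fun _ => (1 : ℤ))
    (hsig : ∀ i ≤ L, SigD k (z i)) (hadj : ∀ i < L, AdjD k (z i) (z (i + 1))) :
    k ≤ L := by
  by_contra hc
  push_neg at hc
  have key : ∀ t, t ≤ L → ∀ j, t ≤ j → j + 1 ≤ k → z t j = 0 := by
    intro t
    induction t with
    | zero => intro _ j _ _
              rw [h0]
    | succ n ih =>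
      intro hn j hj hjk
      obtain ⟨i, rfl⟩ : ∃ i, j = i + 1 := ⟨j - 1, by omega⟩
      obtain ⟨q, hq1, hq2⟩ := hadj n (by omega)
      have h1 : |z (n + 1) (i + 1)| ≤ q i := (hq2 i (by omega)).2
      have h2 : q i ≤ z n i := (hq1 i (by omega)).1
      have h3 : z n i = 0 := ih (by omega) i (by omega) (by omega)
      have h4 : 0 ≤ |z (n + 1) (i + 1)| := abs_nonneg _
      have : |z (n + 1) (i + 1)| = 0 := by linarith
      exact abs_eq_zero.mp this
  have hone := key L le_rfl (k - 1) (by omega) (by omega)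
  rw [hL] at hone
  simp at hone

/- ===== the explicit geodesic paths ===== -/

private def pathB (k : ℕ) (m m' : ℕ → ℤ) (t : ℕ) : ℕ → ℤ :=
  if t = 0 then m else if t = k then m' else Wfam k (extB k m) (extB k m') t

private lemma pathB_agree {k : ℕ} {m m' : ℕ → ℤ} (hm : SigB k m) (hm' : SigB k m')
    (t : ℕ) : ∀ j, j + 1 ≤ k → Wfam k (extB k m) (extB k m') t j = pathB k m m' t j := by
  intro j hj
  by_cases h0 : t = 0
  · subst h0
    rw [pathB, if_pos rfl]
    exact WB_zero hm hj
  · by_cases hkk : t = k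
    · subst hkk
      rw [pathB, if_neg h0, if_pos rfl]
      exact WB_last hm' hj
    · rw [pathB, if_neg h0, if_neg hkk]

private lemma pathB_sig {k : ℕ} {m m' : ℕ → ℤ} (hk : 1 ≤ k) (hm : SigB k m)
    (hm' : SigB k m') (t : ℕ) : SigB k (pathB k m m' t) :=
  sigB_congr hk (pathB_agree hm hm' t)
    (Wfam_sigB (extB_step hm) (extB_step hm') (extB_nonneg hm) (extB_nonneg hm') t)

private lemma pathB_adj {k : ℕ} {m m' : ℕ → ℤ} (hk : 1 ≤ k) (hm : SigB k m)
    (hm' : SigB k m') {t : ℕ} (ht : t < k) :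
    AdjB k (pathB k m m' t) (pathB k m m' (t + 1)) :=
  adjB_congr hk (pathB_agree hm hm' t) (pathB_agree hm hm' (t + 1))
    (Wfam_adjB (extB_step hm) (extB_step hm') (extB_nonneg hm) (extB_nonneg hm') ht)

private def pathD (k : ℕ) (m m' : ℕ → ℤ) (t : ℕ) : ℕ → ℤ :=
  if t = 0 then m else if t = k then m' else Wfam k (extD k m) (extD k m') t

private lemma pathD_agree {k : ℕ} {m m' : ℕ → ℤ} (hk2 : 2 ≤ k) (hm : SigD k m)
    (hm' : SigD k m') (t : ℕ) :
    (∀ j, j + 2 ≤ k → Wfam k (extD k m) (extD k m') t j = pathD k m m' t j) ∧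
      |Wfam k (extD k m) (extD k m') t (k - 1)| = |pathD k m m' t (k - 1)| := by
  by_cases h0 : t = 0
  · subst h0
    constructor
    · intro j hj
      rw [pathD, if_pos rfl]
      exact WD_zero hm hk2 hj
    · rw [pathD, if_pos rfl]
      exact WD_zero_abs hk2
  · by_cases hkk : t = k
    · subst hkk
      constructor
      · intro j hj
        rw [pathD, if_neg h0, if_pos rfl]
        exact WD_last hm' hk2 hj
      · rw [pathD, if_neg h0, if_pos rfl]
        exact WD_last_abs hk2
    · constructor
      · intro j hj
        rw [pathD, if_neg h0, if_neg hkk]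
      · rw [pathD, if_neg h0, if_neg hkk]

private lemma pathD_sig {k : ℕ} {m m' : ℕ → ℤ} (hk2 : 2 ≤ k) (hm : SigD k m)
    (hm' : SigD k m') (t : ℕ) : SigD k (pathD k m m' t) :=
  sigD_congr hk2 (pathD_agree hk2 hm hm' t).1 (pathD_agree hk2 hm hm' t).2
    (Wfam_sigD (extD_step hm hk2) (extD_step hm' hk2) (extD_nonneg hm hk2)
      (extD_nonneg hm' hk2) hk2 t)

private lemma pathD_adj {k : ℕ} {m m' : ℕ → ℤ} (hk2 : 2 ≤ k) (hm : SigD k m)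
    (hm' : SigD k m') {t : ℕ} (ht : t < k) :
    AdjD k (pathD k m m' t) (pathD k m m' (t + 1)) :=
  adjD_congr hk2 (pathD_agree hk2 hm hm' t).1 (pathD_agree hk2 hm hm' t).2
    (pathD_agree hk2 hm hm' (t + 1)).1 (pathD_agree hk2 hm hm' (t + 1)).2
    (Wfam_adjD (extD_step hm hk2) (extD_step hm' hk2) (extD_nonneg hm hk2)
      (extD_nonneg hm' hk2) ht)

/-- For `N ≥ 3` and `k = ⌊N/2⌋`, the interlacing graph on `SO(N)`-signatures has
diameter exactly `k`: every pair of signatures is joined by a walk of length at most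
`k`, and any walk from `(0,…,0)` to `(1,…,1)` has length at least `k`. -/
theorem so_diam_eq (N : ℕ) (hN : 3 ≤ N) (k : ℕ) (hk : k = N / 2) :
    (N = 2 * k →
      (∀ m m' : ℕ → ℤ, SigD k m → SigD k m' →
        ∃ L ≤ k, ∃ z : ℕ → ℕ → ℤ, z 0 = m ∧ z L = m' ∧
          (∀ i ≤ L, SigD k (z i)) ∧ (∀ i < L, AdjD k (z i) (z (i + 1)))) ∧
      (∀ (L : ℕ) (z : ℕ → ℕ → ℤ), z 0 = (fun _ => (0 : ℤ)) → z L = (fun _ => (1 : ℤ)) →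
        (∀ i ≤ L, SigD k (z i)) → (∀ i < L, AdjD k (z i) (z (i + 1))) → k ≤ L)) ∧
    (N = 2 * k + 1 →
      (∀ m m' : ℕ → ℤ, SigB k m → SigB k m' →
        ∃ L ≤ k, ∃ z : ℕ → ℕ → ℤ, z 0 = m ∧ z L = m' ∧
          (∀ i ≤ L, SigB k (z i)) ∧ (∀ i < L, AdjB k (z i) (z (i + 1)))) ∧
      (∀ (L : ℕ) (z : ℕ → ℕ → ℤ), z 0 = (fun _ => (0 : ℤ)) → z L = (fun _ => (1 : ℤ)) →
        (∀ i ≤ L, SigB k (z i)) → (∀ i < L, AdjB k (z i) (z (i + 1))) → k ≤ L)) := by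
  constructor
  · intro hN2
    have hk2 : 2 ≤ k := by omega
    refine ⟨fun m m' hm hm' => ?_, fun L z h0 hL hs ha => lowerD (by omega) L z h0 hL hs ha⟩
    refine ⟨k, le_rfl, pathD k m m', ?_, ?_, fun i _ => pathD_sig hk2 hm hm' i,
      fun i hi => pathD_adj hk2 hm hm' hi⟩
    · simp [pathD]
    · simp [pathD, show k ≠ 0 by omega]
  · intro hN2
    have hk1 : 1 ≤ k := by omega
    refine ⟨fun m m' hm hm' => ?_, fun L z h0 hL hs ha => lowerB (by omega) L z h0 hL hs ha⟩
    refine ⟨k, le_rfl, pathB k m m', ?_, ?_, fun i _ => pathB_sig hk1 hm hm' i,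
      fun i hi => pathB_adj hk1 hm hm' hi⟩
    · simp [pathB]
    · simp [pathB, show k ≠ 0 by omega]
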